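/- arXiv:2108.01247 — 2 statements merged into one kernel-verified Lean document; each statement's English description precedes it below -/
import Mathlib

section
/- ∫₀¹ ((arcsin x)³)/x dx = (π³/8)·log 2 − (9/16)·π·ζ(3), where the integral is taken over the real interval [0,1]. (Here the formula follows from I(3,0) = (π/2)·I(2,0) − I(2,1) with I(2,0) = (π²/4)log 2 − (7/8)ζ(3) and I(2,1) = (π/8)ζ(3).) -/
open Real Filter MeasureTheory Finset Set intervalIntegral Topology

noncomputable def zeta3 : ℝ := ∑' n : ℕ, 1 / ((n : ℝ) + 1) ^ 3

lemma summable3 : Summable (fun n : ℕ => 1 / ((n : ℝ) + 1) ^ 3) := by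
  have h := (Real.summable_one_div_nat_pow.mpr (by norm_num : 1 < 3)).comp_injective
    Nat.succ_injective
  refine h.congr fun n => ?_
  simp [Function.comp]

lemma hasSum_zeta3 : HasSum (fun n : ℕ => 1/((n:ℝ)+1)^3) zeta3 := summable3.hasSum

lemma hasSum_alt : HasSum (fun n : ℕ => (-1:ℝ)^n / ((n:ℝ)+1)^3) (3/4 * zeta3) := by
  set f : ℕ → ℝ := fun n => 1/((n:ℝ)+1)^3 with hf
  set g : ℕ → ℝ := fun n => (-1:ℝ)^n / ((n:ℝ)+1)^3 with hg
  have h : HasSum f zeta3 := hasSum_zeta3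
  have hOfun : (fun k : ℕ => f (2*k+1)) = fun k => (1/8) * f k := by
    funext k; simp only [hf]; push_cast; have : ((k:ℝ)+1) ≠ 0 := by positivity
    field_simp; ring
  have hO : HasSum (fun k => f (2*k+1)) (1/8 * zeta3) := by rw [hOfun]; exact h.mul_left _
  have hEs : Summable (fun k => f (2*k)) :=
    h.summable.comp_injective (fun a b hab => by omega)
  have hE : HasSum (fun k => f (2*k)) (∑' k, f (2*k)) := hEs.hasSum
  have hsplit : HasSum f ((∑' k, f (2*k)) + 1/8 * zeta3) := hE.even_add_odd hO
  have hEval : (∑' k, f (2*k)) = zeta3 - 1/8 * zeta3 := by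
    have := hsplit.unique h; linarith
  have hgE : HasSum (fun k => g (2*k)) (zeta3 - 1/8 * zeta3) := by
    rw [show (fun k : ℕ => g (2*k)) = fun k => f (2*k) by
      funext k; simp [hg, hf, pow_mul]]
    rw [← hEval]; exact hE
  have hgO : HasSum (fun k => g (2*k+1)) (-(1/8 * zeta3)) := by
    rw [show (fun k : ℕ => g (2*k+1)) = fun k => -(f (2*k+1)) by
      funext k; simp [hg, hf, pow_succ, pow_mul, neg_div]]
    exact hO.neg
  have := hgE.even_add_odd hgO
  convert this using 1
  ring


-- slit plane condition
lemma slit_cond {z : ℂ} (hz : ‖z‖ ≤ 1) {t : ℝ} (ht : t ∈ Set.Icc (0:ℝ) 1)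
    (hne : (1 : ℂ) - t*z ≠ 0) : 0 < ((1:ℂ) - t*z).re ∨ ((1:ℂ) - t*z).im ≠ 0 := by
  by_cases him : ((1:ℂ) - t*z).im = 0
  · left
    have him' : ((t:ℂ)*z).im = 0 := by
      have := him; simp [Complex.sub_im] at this; simpa using this
    have habs : ‖(t:ℂ)*z‖ ≤ 1 := by
      rw [norm_mul]
      have : ‖(t:ℂ)‖ = t := by rw [Complex.norm_real, Real.norm_eq_abs, abs_of_nonneg ht.1]
      calc ‖(t:ℂ)‖ * ‖z‖ ≤ 1 * 1 := by
            apply mul_le_mul _ hz (norm_nonneg _) zero_le_one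
            rw [this]; exact ht.2
        _ = 1 := by ring
    have hre : |((t:ℂ)*z).re| ≤ 1 := by
      calc |((t:ℂ)*z).re| ≤ ‖(t:ℂ)*z‖ := Complex.abs_re_le_norm _
        _ ≤ 1 := habs
    have h1 : ((1:ℂ) - t*z).re = 1 - ((t:ℂ)*z).re := by simp
    rw [h1]
    rcases lt_or_eq_of_le (abs_le.mp hre).2 with h | h
    · linarith
    · exfalso; apply hne
      have : (t:ℂ)*z = 1 := by
        apply Complex.ext <;> simp [h, him']
      rw [this]; ring
  · right; exact him

lemma log_series_bound (z : ℂ) (hz : ‖z‖ ≤ 1) {c : ℝ} (hc : 0 < c)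
    (hmin : ∀ t : ℝ, t ∈ Set.Icc (0:ℝ) 1 → c ≤ ‖(1:ℂ) - t*z‖) (N : ℕ) :
    ‖(∑ k ∈ Finset.range N, z^(k+1)/(k+1)) + Complex.log (1-z)‖ ≤ 1/(c*(N+1)) := by
  have hne : ∀ t : ℝ, t ∈ Set.Icc (0:ℝ) 1 → (1:ℂ) - t*z ≠ 0 := by
    intro t ht h
    have := hmin t ht
    rw [h, norm_zero] at this; linarith
  -- continuity of t ↦ 1 - t z and denominator
  have hcont1 : Continuous fun t : ℝ => (1:ℂ) - t*z := by continuity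
  -- step 1 : each term is an integral
  have hterm : ∀ k : ℕ, (z:ℂ)^(k+1)/(k+1) = ∫ t in (0:ℝ)..1, (t:ℂ)^k * z^(k+1) := by
    intro k
    rw [intervalIntegral.integral_mul_const]
    have : (∫ t in (0:ℝ)..1, (t:ℂ)^k) = 1/(k+1) := by
      have : (∫ t in (0:ℝ)..1, (t:ℂ)^k) = ((∫ t in (0:ℝ)..1, t^k : ℝ) : ℂ) := by
        rw [← intervalIntegral.integral_ofReal]
        norm_num
      rw [this, integral_pow]
      push_cast; norm_num
    rw [this]; ring
  have hIcc : ∀ t : ℝ, t ∈ Set.uIcc (0:ℝ) 1 → t ∈ Set.Icc (0:ℝ) 1 := by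
    intro t ht; rwa [Set.uIcc_of_le zero_le_one] at ht
  have hcontden : ContinuousOn (fun t : ℝ => z/(1-(t:ℂ)*z)) (Set.uIcc (0:ℝ) 1) :=
    continuousOn_const.div hcont1.continuousOn (fun t ht => hne t (hIcc t ht))
  have hcontnum : ContinuousOn (fun t : ℝ => z^(N+1)*(t:ℂ)^N/(1-(t:ℂ)*z)) (Set.uIcc (0:ℝ) 1) := by
    apply ContinuousOn.div _ hcont1.continuousOn (fun t ht => hne t (hIcc t ht))
    exact (continuous_const.mul ((Complex.continuous_ofReal.pow N))).continuousOn
  have hi1 : IntervalIntegrable (fun t : ℝ => z/(1-(t:ℂ)*z)) MeasureTheory.volume 0 1 :=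
    hcontden.intervalIntegrable
  have hi2 : IntervalIntegrable (fun t : ℝ => z^(N+1)*(t:ℂ)^N/(1-(t:ℂ)*z)) MeasureTheory.volume 0 1 :=
    hcontnum.intervalIntegrable
  have hsum : (∑ k ∈ Finset.range N, z^(k+1)/(k+1))
      = ∫ t in (0:ℝ)..1, ∑ k ∈ Finset.range N, (t:ℂ)^k * z^(k+1) := by
    rw [intervalIntegral.integral_finset_sum]
    · exact Finset.sum_congr rfl fun k _ => hterm k
    · intro k _
      exact (Continuous.intervalIntegrable (by continuity) _ _)
  have hinner : ∀ t : ℝ, t ∈ Set.Icc (0:ℝ) 1 →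
      (∑ k ∈ Finset.range N, (t:ℂ)^k * z^(k+1))
      = z/(1-(t:ℂ)*z) - z^(N+1)*(t:ℂ)^N/(1-(t:ℂ)*z) := by
    intro t ht
    have h0 : (1:ℂ) - (t:ℂ)*z ≠ 0 := hne t ht
    have hw : (t:ℂ)*z ≠ 1 := fun h => h0 (by rw [h]; ring)
    have hstep : ∑ k ∈ Finset.range N, (t:ℂ)^k * z^(k+1)
        = z * ∑ k ∈ Finset.range N, ((t:ℂ)*z)^k := by
      rw [Finset.mul_sum]; exact Finset.sum_congr rfl fun k _ => by ring
    have h1 : (t:ℂ)*z - 1 ≠ 0 := sub_ne_zero.mpr hw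
    rw [hstep, geom_sum_eq hw, div_sub_div_same, eq_div_iff h0, mul_assoc, div_mul_eq_mul_div,
      show (1:ℂ) - t*z = -((t:ℂ)*z - 1) by ring, mul_neg, neg_div, mul_div_cancel_right₀ _ h1]
    ring
  have hderiv : ∀ t ∈ Set.uIcc (0:ℝ) 1,
      HasDerivAt (fun s : ℝ => -Complex.log (1 - s*z)) (z/(1-(t:ℂ)*z)) t := by
    intro t ht
    have ht' : t ∈ Set.Icc (0:ℝ) 1 := hIcc t ht
    have hlin : HasDerivAt (fun s : ℝ => (1:ℂ) - s*z) (-z) t := by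
      have h1 : HasDerivAt (fun s : ℝ => ((s:ℝ):ℂ)) (1:ℂ) t := by
        simpa using (hasDerivAt_id t).ofReal_comp
      simpa using (h1.mul_const z).const_sub 1
    have := (hlin.clog_real (slit_cond hz ht' (hne t ht'))).neg
    refine this.congr_deriv ?_
    ring
  have hI1 : (∫ t in (0:ℝ)..1, z/(1-(t:ℂ)*z)) = -Complex.log (1-z) := by
    rw [intervalIntegral.integral_eq_sub_of_hasDerivAt hderiv hi1]
    simp
  have key : (∑ k ∈ Finset.range N, z^(k+1)/(k+1)) + Complex.log (1-z)
      = -(∫ t in (0:ℝ)..1, z^(N+1)*(t:ℂ)^N/(1-(t:ℂ)*z)) := by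
    rw [hsum, intervalIntegral.integral_congr
        (g := fun t : ℝ => z/(1-(t:ℂ)*z) - z^(N+1)*(t:ℂ)^N/(1-(t:ℂ)*z))
        (fun t ht => hinner t (hIcc t ht)),
      intervalIntegral.integral_sub hi1 hi2, hI1]
    ring
  rw [key, norm_neg]
  have hptbd : ∀ t ∈ Set.uIoc (0:ℝ) 1, ‖z^(N+1)*(t:ℂ)^N/(1-(t:ℂ)*z)‖ ≤ t^N/c := by
    intro t ht
    rw [Set.uIoc_of_le zero_le_one] at ht
    have ht' : t ∈ Set.Icc (0:ℝ) 1 := ⟨le_of_lt ht.1, ht.2⟩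
    have hden := hmin t ht'
    rw [norm_div, norm_mul, norm_pow, norm_pow, Complex.norm_real, Real.norm_eq_abs,
      abs_of_nonneg ht'.1]
    have htN : (0:ℝ) ≤ t^N := pow_nonneg ht'.1 N
    have hnum : ‖z‖^(N+1) * t^N ≤ t^N := by
      calc ‖z‖^(N+1) * t^N ≤ 1 * t^N :=
            mul_le_mul_of_nonneg_right (pow_le_one₀ (norm_nonneg _) hz) htN
        _ = t^N := one_mul _
    exact div_le_div₀ htN hnum hc hden
  have hgint : IntervalIntegrable (fun t : ℝ => t^N/c) MeasureTheory.volume 0 1 :=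
    (Continuous.intervalIntegrable ((continuous_pow N).div_const c) _ _)
  have hb := intervalIntegral.norm_integral_le_abs_of_norm_le
    (MeasureTheory.ae_restrict_of_forall_mem measurableSet_uIoc hptbd) hgint
  have hgval : (∫ t in (0:ℝ)..1, t^N/c) = 1/(c*(N+1)) := by
    rw [intervalIntegral.integral_div, integral_pow]
    push_cast; field_simp; ring
  rw [hgval] at hb
  calc ‖∫ t in (0:ℝ)..1, z^(N+1)*(t:ℂ)^N/(1-(t:ℂ)*z)‖ ≤ |1/(c*(N+1))| := hb
    _ = 1/(c*(N+1)) := abs_of_nonneg (by positivity)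


lemma cos_series {θ : ℝ} (h1 : 0 < θ) (h2 : θ ≤ π/2) (N : ℕ) :
    |(∑ k ∈ Finset.range N, Real.cos (2*(k+1)*θ)/(k+1)) + Real.log (2*Real.sin θ)|
      ≤ 1/(Real.sin θ*(N+1)) := by
  have hsin : 0 < Real.sin θ := Real.sin_pos_of_pos_of_lt_pi h1
    (lt_of_le_of_lt h2 (by linarith [Real.pi_pos]))
  set z : ℂ := Complex.exp ((2*θ : ℝ) * Complex.I) with hzdef
  have hzre : z.re = Real.cos (2*θ) := Complex.exp_ofReal_mul_I_re _
  have hzim : z.im = Real.sin (2*θ) := Complex.exp_ofReal_mul_I_im _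
  have hznorm : ‖z‖ = 1 := Complex.norm_exp_ofReal_mul_I _
  -- lower bound for the denominator
  have hmin : ∀ t : ℝ, t ∈ Set.Icc (0:ℝ) 1 → Real.sin θ ≤ ‖(1:ℂ) - t*z‖ := by
    intro t ht
    have hsq : ‖(1:ℂ) - t*z‖^2 = 1 - 2*t*Real.cos (2*θ) + t^2 := by
      rw [Complex.sq_norm, Complex.normSq_apply]
      simp only [Complex.sub_re, Complex.sub_im, Complex.one_re, Complex.one_im,
        Complex.mul_re, Complex.mul_im, Complex.ofReal_re, Complex.ofReal_im, hzre, hzim]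
      have := Real.sin_sq_add_cos_sq (2*θ)
      ring_nf
      ring_nf at this
      nlinarith [this]
    have hsinsq : Real.sin θ^2 = (1 - Real.cos (2*θ))/2 := by
      rw [Real.cos_two_mul]
      have := Real.sin_sq_add_cos_sq θ
      nlinarith
    have hc2 : -1 ≤ Real.cos (2*θ) := Real.neg_one_le_cos _
    have hineq : Real.sin θ^2 ≤ ‖(1:ℂ) - t*z‖^2 := by
      rw [hsq, hsinsq]
      nlinarith [sq_nonneg (t - Real.cos (2*θ)), ht.1, ht.2,
        mul_nonneg ht.1 (neg_nonneg.mpr (le_of_lt (neg_neg_iff_pos.mpr hsin)))]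
    have := Real.sqrt_le_sqrt (le_of_eq hsinsq.symm)
    calc Real.sin θ = Real.sqrt (Real.sin θ^2) := (Real.sqrt_sq hsin.le).symm
      _ ≤ Real.sqrt (‖(1:ℂ) - t*z‖^2) := Real.sqrt_le_sqrt hineq
      _ = ‖(1:ℂ) - t*z‖ := Real.sqrt_sq (norm_nonneg _)
  have hb := log_series_bound z (le_of_eq hznorm) hsin hmin N
  -- abs of 1 - z
  have habs : ‖1 - z‖ = 2*Real.sin θ := by
    have hsq : (‖1-z‖)^2 = (2*Real.sin θ)^2 := by
      rw [Complex.sq_norm, Complex.normSq_apply]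
      simp only [Complex.sub_re, Complex.sub_im, Complex.one_re, Complex.one_im, hzre, hzim]
      have h1 := Real.sin_sq_add_cos_sq (2*θ)
      have h2 : Real.cos (2*θ) = 1 - 2*Real.sin θ^2 := by
        rw [Real.cos_two_mul]; nlinarith [Real.sin_sq_add_cos_sq θ]
      nlinarith
    nlinarith [norm_nonneg (1-z), hsin]
  -- real parts
  have hre : ((∑ k ∈ Finset.range N, z^(k+1)/(k+1)) + Complex.log (1-z)).re
      = (∑ k ∈ Finset.range N, Real.cos (2*(k+1)*θ)/(k+1)) + Real.log (2*Real.sin θ) := by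
    rw [Complex.add_re, Complex.log_re, habs, Complex.re_sum]
    congr 1
    refine Finset.sum_congr rfl fun k _ => ?_
    have hzk : z^(k+1) = Complex.exp ((2*(k+1)*θ : ℝ) * Complex.I) := by
      rw [hzdef, ← Complex.exp_nat_mul]
      congr 1
      push_cast; ring
    have : ((k:ℂ) + 1) = (((k:ℝ)+1 : ℝ) : ℂ) := by push_cast; ring
    rw [hzk, this, Complex.div_ofReal_re, Complex.exp_ofReal_mul_I_re]
  calc |(∑ k ∈ Finset.range N, Real.cos (2*(k+1)*θ)/(k+1)) + Real.log (2*Real.sin θ)|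
      = |((∑ k ∈ Finset.range N, z^(k+1)/(k+1)) + Complex.log (1-z)).re| := by rw [hre]
    _ ≤ ‖(∑ k ∈ Finset.range N, z^(k+1)/(k+1)) + Complex.log (1-z)‖ :=
        Complex.abs_re_le_norm _
    _ ≤ 1/(Real.sin θ*(N+1)) := hb


lemma cos_nat_pi (m : ℕ) : Real.cos (m * π) = (-1)^m := by
  induction m with
  | zero => simp
  | succ n ih =>
    have : ((n+1 : ℕ) : ℝ) * π = n*π + π := by push_cast; ring
    rw [this, Real.cos_add_pi, ih, pow_succ]
    ring

lemma integral_sq_cos (m : ℕ) (hm : 1 ≤ m) :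
    ∫ x in (0:ℝ)..(π/2), x^2 * Real.cos (2*m*x) = π*(-1)^m/(4*m^2) := by
  have hm' : (0:ℝ) < m := by exact_mod_cast hm
  set a : ℝ := 2*m with ha
  have ha0 : a ≠ 0 := by positivity
  set F : ℝ → ℝ := fun x => x^2 * Real.sin (a*x)/a + 2*x*Real.cos (a*x)/a^2
    - 2*Real.sin (a*x)/a^3 with hF
  have hderiv : ∀ x ∈ Set.uIcc (0:ℝ) (π/2), HasDerivAt F (x^2 * Real.cos (a*x)) x := by
    intro x _
    have hs : HasDerivAt (fun x : ℝ => Real.sin (a*x)) (a * Real.cos (a*x)) x := by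
      simpa [Function.comp_def, mul_comm] using (Real.hasDerivAt_sin (a*x)).comp x
        ((hasDerivAt_id' x).const_mul a)
    have hc : HasDerivAt (fun x : ℝ => Real.cos (a*x)) (-(a * Real.sin (a*x))) x := by
      simpa [Function.comp_def, mul_comm] using (Real.hasDerivAt_cos (a*x)).comp x
        ((hasDerivAt_id' x).const_mul a)
    have h1 : HasDerivAt (fun x : ℝ => x^2 * Real.sin (a*x)/a)
        ((2*x*Real.sin (a*x) + x^2*(a*Real.cos (a*x)))/a) x := by
      exact ((hasDerivAt_pow 2 x).mul hs).div_const a |>.congr_deriv (by ring)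
    have h2 : HasDerivAt (fun x : ℝ => 2*x*Real.cos (a*x)/a^2)
        ((2*Real.cos (a*x) + 2*x*(-(a*Real.sin (a*x))))/a^2) x := by
      exact (((hasDerivAt_id' x).const_mul 2).mul hc).div_const (a^2) |>.congr_deriv (by ring)
    have h3 : HasDerivAt (fun x : ℝ => 2*Real.sin (a*x)/a^3)
        (2*(a*Real.cos (a*x))/a^3) x := by
      exact (hs.const_mul 2).div_const (a^3) |>.congr_deriv (by ring)
    have := (h1.add h2).sub h3
    refine this.congr_deriv ?_
    rw [div_add_div _ _ ha0 (pow_ne_zero 2 ha0),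
      div_sub_div _ _ (mul_ne_zero ha0 (pow_ne_zero 2 ha0)) (pow_ne_zero 3 ha0),
      div_eq_iff (mul_ne_zero (mul_ne_zero ha0 (pow_ne_zero 2 ha0)) (pow_ne_zero 3 ha0))]
    ring
  have hcont : Continuous fun x : ℝ => x^2 * Real.cos (a*x) :=
    (continuous_pow 2).mul (Real.continuous_cos.comp (continuous_const.mul continuous_id))
  have := intervalIntegral.integral_eq_sub_of_hasDerivAt hderiv
    (hcont.intervalIntegrable _ _)
  have harg : a * (π/2) = m * π := by rw [ha]; ring
  have hsin0 : Real.sin (a*(π/2)) = 0 := by rw [harg]; exact Real.sin_nat_mul_pi m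
  have hcos0 : Real.cos (a*(π/2)) = (-1)^m := by rw [harg]; exact cos_nat_pi m
  rw [show (fun x : ℝ => x^2 * Real.cos (2*(m:ℝ)*x)) = fun x => x^2 * Real.cos (a*x) from rfl]
  rw [this]
  rw [hF]
  simp only [hsin0, hcos0]
  field_simp
  simp only [ha, zero_mul, Real.sin_zero, Real.cos_zero]
  ring


lemma sin_pos' {θ : ℝ} (h1 : 0 < θ) (h2 : θ ≤ π/2) : 0 < Real.sin θ :=
  Real.sin_pos_of_pos_of_lt_pi h1 (lt_of_le_of_lt h2 (by linarith [Real.pi_pos]))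

lemma inv_sin_le {θ : ℝ} (h1 : 0 < θ) (h2 : θ ≤ π/2) : 1/Real.sin θ ≤ π/(2*θ) := by
  have hj : 2/π*θ ≤ Real.sin θ := Real.mul_le_sin h1.le h2
  have h0 : 0 < 2/π*θ := by positivity
  calc 1/Real.sin θ ≤ 1/(2/π*θ) := one_div_le_one_div_of_le h0 hj
    _ = π/(2*θ) := by field_simp
lemma abs_log_sin_le {θ : ℝ} (h1 : 0 < θ) (h2 : θ ≤ π/2) : |Real.log (Real.sin θ)| ≤ π/(2*θ) := by
  have hs := sin_pos' h1 h2
  have hle : Real.sin θ ≤ 1 := Real.sin_le_one θ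
  have hlog : Real.log (Real.sin θ) ≤ 0 := Real.log_nonpos hs.le hle
  rw [abs_of_nonpos hlog, ← Real.log_inv]
  calc Real.log (Real.sin θ)⁻¹ ≤ (Real.sin θ)⁻¹ - 1 :=
      Real.log_le_sub_one_of_pos (by positivity)
    _ ≤ 1/Real.sin θ := by rw [one_div]; linarith
    _ ≤ π/(2*θ) := inv_sin_le h1 h2

lemma ii_of_bounded {f : ℝ → ℝ} (hm : Measurable f) {C : ℝ}
    (hb : ∀ θ ∈ Set.Ioc (0:ℝ) (π/2), |f θ| ≤ C) :
    IntervalIntegrable f MeasureTheory.volume 0 (π/2) := by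
  rw [intervalIntegrable_iff_integrableOn_Ioc_of_le (by positivity)]
  apply MeasureTheory.Integrable.mono'
    (MeasureTheory.integrableOn_const measure_Ioc_lt_top.ne)
    hm.aestronglyMeasurable
  rw [MeasureTheory.ae_restrict_iff' measurableSet_Ioc]
  exact MeasureTheory.ae_of_all _ (fun θ hθ => by simpa [Real.norm_eq_abs] using hb θ hθ)

lemma meas_log_sin : Measurable fun θ : ℝ => θ^2 * Real.log (Real.sin θ) :=
  ((continuous_pow 2).measurable).mul (Real.continuous_sin.measurable.log)

lemma bound_log_sin : ∀ θ ∈ Set.Ioc (0:ℝ) (π/2), |θ^2 * Real.log (Real.sin θ)| ≤ π^2/4 := by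
  intro θ hθ
  have h3 := abs_log_sin_le hθ.1 hθ.2
  have hθπ : θ ≤ π/2 := hθ.2
  rw [abs_mul, abs_of_nonneg (by positivity : (0:ℝ) ≤ θ^2)]
  calc θ^2 * |Real.log (Real.sin θ)| ≤ θ^2 * (π/(2*θ)) := by
        apply mul_le_mul_of_nonneg_left h3 (by positivity)
    _ = π*θ/2 := by field_simp [hθ.1.ne']
    _ ≤ π*(π/2)/2 := by nlinarith [Real.pi_pos]
    _ = π^2/4 := by ring

lemma ii_sq_log_sin : IntervalIntegrable (fun θ => θ^2 * Real.log (Real.sin θ))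
    MeasureTheory.volume 0 (π/2) := ii_of_bounded meas_log_sin bound_log_sin

lemma ii_sq_log_two_sin : IntervalIntegrable (fun θ => θ^2 * Real.log (2*Real.sin θ))
    MeasureTheory.volume 0 (π/2) := by
  refine ii_of_bounded (C := π^2/4 * Real.log 2 + π^2/4)
    (((continuous_pow 2).measurable).mul
      ((Real.continuous_sin.measurable.const_mul 2).log)) ?_
  · intro θ hθ
    have hs := sin_pos' hθ.1 hθ.2
    rw [Real.log_mul (by norm_num) hs.ne']
    have h1 := bound_log_sin θ hθ
    have hl2 : (0:ℝ) ≤ Real.log 2 := Real.log_nonneg (by norm_num)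
    have hθ2 : θ^2 ≤ π^2/4 := by nlinarith [hθ.1, hθ.2, Real.pi_pos]
    calc |θ^2 * (Real.log 2 + Real.log (Real.sin θ))|
        ≤ θ^2 * Real.log 2 + |θ^2 * Real.log (Real.sin θ)| := by
          rw [mul_add]
          refine (abs_add_le _ _).trans ?_
          rw [abs_of_nonneg (by positivity)]
      _ ≤ π^2/4 * Real.log 2 + π^2/4 := by
          have := mul_le_mul_of_nonneg_right hθ2 hl2
          linarith
lemma ii_cube_cot : IntervalIntegrable (fun θ => θ^3 * Real.cos θ / Real.sin θ)
    MeasureTheory.volume 0 (π/2) := by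
  refine ii_of_bounded (C := π^3/8)
    ((((continuous_pow 3).mul Real.continuous_cos).measurable).div
      Real.continuous_sin.measurable) ?_
  · intro θ hθ
    have hs := sin_pos' hθ.1 hθ.2
    have hinv := inv_sin_le hθ.1 hθ.2
    have hcos : |Real.cos θ| ≤ 1 := Real.abs_cos_le_one θ
    have hθ3 : (0:ℝ) < θ := hθ.1
    rw [abs_div, abs_mul, abs_of_nonneg (by positivity : (0:ℝ) ≤ θ^3),
      abs_of_pos hs]
    calc θ^3 * |Real.cos θ| / Real.sin θ ≤ θ^3 * 1 / Real.sin θ := by gcongr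
      _ = θ^3 * (1/Real.sin θ) := by ring
      _ ≤ θ^3 * (π/(2*θ)) := by
          apply mul_le_mul_of_nonneg_left hinv (by positivity)
      _ = π*θ^2/2 := by field_simp
      _ ≤ π*(π/2)^2/2 := by
          have h := pow_le_pow_left₀ hθ.1.le hθ.2 2
          nlinarith [Real.pi_pos]
      _ = π^3/8 := by ring


lemma integral_sq_log_two_sin :
    ∫ θ in (0:ℝ)..(π/2), θ^2 * Real.log (2*Real.sin θ) = 3*π/16 * zeta3 := by
  have hpi := Real.pi_pos
  set F : ℕ → ℝ → ℝ :=
    fun N θ => θ^2 * ∑ k ∈ Finset.range N, Real.cos (2*(k+1)*θ)/(k+1) with hFdef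
  set f : ℝ → ℝ := fun θ => -(θ^2 * Real.log (2*Real.sin θ)) with hfdef
  -- dominated convergence
  have hmeas : ∀ N : ℕ, AEStronglyMeasurable (F N)
      (MeasureTheory.volume.restrict (Set.uIoc (0:ℝ) (π/2))) := by
    intro N
    apply Continuous.aestronglyMeasurable
    exact (continuous_pow 2).mul (continuous_finset_sum _ fun k _ =>
      (Real.continuous_cos.comp (continuous_const.mul continuous_id)).div_const _)
  have hboundval : ∀ N : ℕ, ∀ θ, θ ∈ Set.uIoc (0:ℝ) (π/2) → ‖F N θ‖ ≤ 20 := by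
    intro N θ hθ
    rw [Set.uIoc_of_le (by positivity)] at hθ
    obtain ⟨hθ0, hθπ⟩ := hθ
    have hs := sin_pos' hθ0 hθπ
    have hser := cos_series hθ0 hθπ N
    have hinv := inv_sin_le hθ0 hθπ
    set S := ∑ k ∈ Finset.range N, Real.cos (2*(k+1)*θ)/(k+1) with hSdef
    set L := Real.log (2*Real.sin θ) with hLdef
    have habslog : |L| ≤ Real.log 2 + π/(2*θ) := by
      rw [hLdef, Real.log_mul (by norm_num) hs.ne']
      refine (abs_add_le _ _).trans ?_
      rw [abs_of_nonneg (Real.log_nonneg (by norm_num))]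
      have := abs_log_sin_le hθ0 hθπ
      linarith
    have hSL : |S + L| ≤ π/(2*θ) := by
      refine hser.trans ?_
      have h1 : Real.sin θ ≤ Real.sin θ * (N+1) :=
        le_mul_of_one_le_right hs.le (by
          have := (Nat.cast_nonneg N : (0:ℝ) ≤ N); linarith)
      calc 1/(Real.sin θ*(N+1)) ≤ 1/Real.sin θ := one_div_le_one_div_of_le hs h1
        _ ≤ π/(2*θ) := hinv
    have htri : |S| ≤ Real.log 2 + π/(2*θ) + π/(2*θ) := by
      have : |S| ≤ |S + L| + |L| := by
        calc |S| = |(S + L) + (-L)| := by congr 1; ring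
          _ ≤ |S + L| + |(-L)| := abs_add_le _ _
          _ = |S + L| + |L| := by rw [abs_neg]
      linarith
    have hθ2 : θ^2 ≤ (π/2)^2 := pow_le_pow_left₀ hθ0.le hθπ 2
    have hlog2 : Real.log 2 ≤ 1 := by
      nlinarith [Real.log_two_lt_d9]
    have hcross : θ^2 * (π/(2*θ)) = π*θ/2 := by field_simp [hθ0.ne']
    have hFval : ‖F N θ‖ = θ^2 * |S| := by
      rw [hFdef, Real.norm_eq_abs, abs_mul, abs_of_nonneg (by positivity : (0:ℝ) ≤ θ^2)]
    rw [hFval]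
    calc θ^2 * |S| ≤ θ^2 * (Real.log 2 + π/(2*θ) + π/(2*θ)) :=
          mul_le_mul_of_nonneg_left htri (by positivity)
      _ = θ^2 * Real.log 2 + 2*(θ^2 * (π/(2*θ))) := by ring
      _ = θ^2 * Real.log 2 + 2*(π*θ/2) := by rw [hcross]
      _ ≤ (π/2)^2 * 1 + π*π := by
          have h5 : θ^2 * Real.log 2 ≤ (π/2)^2 * 1 := by
            apply mul_le_mul hθ2 hlog2 (Real.log_nonneg (by norm_num)) (by positivity)
          nlinarith
      _ ≤ 20 := by nlinarith [Real.pi_lt_d2]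
  have hlim : ∀ θ, θ ∈ Set.uIoc (0:ℝ) (π/2) →
      Tendsto (fun N => F N θ) atTop (𝓝 (f θ)) := by
    intro θ hθ
    rw [Set.uIoc_of_le (by positivity)] at hθ
    obtain ⟨hθ0, hθπ⟩ := hθ
    have hs := sin_pos' hθ0 hθπ
    have hdiff : Tendsto (fun N : ℕ => F N θ - f θ) atTop (𝓝 0) := by
      have hb : ∀ N : ℕ, ‖F N θ - f θ‖ ≤ θ^2/Real.sin θ * (1/(N+1)) := by
        intro N
        have hser := cos_series hθ0 hθπ N
        have heq : F N θ - f θ = θ^2 * ((∑ k ∈ Finset.range N, Real.cos (2*(k+1)*θ)/(k+1))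
            + Real.log (2*Real.sin θ)) := by rw [hFdef, hfdef]; ring
        rw [heq, Real.norm_eq_abs, abs_mul, abs_of_nonneg (by positivity : (0:ℝ) ≤ θ^2)]
        calc θ^2 * |(∑ k ∈ Finset.range N, Real.cos (2*(k+1)*θ)/(k+1))
              + Real.log (2*Real.sin θ)| ≤ θ^2 * (1/(Real.sin θ*(N+1))) :=
              mul_le_mul_of_nonneg_left hser (by positivity)
          _ = θ^2/Real.sin θ * (1/(N+1)) := by field_simp
      have hg : Tendsto (fun N : ℕ => θ^2/Real.sin θ * (1/((N:ℝ)+1))) atTop (𝓝 0) := by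
        simpa using tendsto_one_div_add_atTop_nhds_zero_nat.const_mul (θ^2/Real.sin θ)
      exact squeeze_zero_norm hb hg
    have := hdiff.add_const (f θ)
    simpa using this
  have hdct := intervalIntegral.tendsto_integral_filter_of_dominated_convergence
    (μ := MeasureTheory.volume) (a := (0:ℝ)) (b := π/2) (F := F) (f := f)
    (fun _ => (20:ℝ))
    (Filter.Eventually.of_forall hmeas)
    (Filter.Eventually.of_forall fun N => MeasureTheory.ae_of_all _ (hboundval N))
    (intervalIntegrable_const)
    (MeasureTheory.ae_of_all _ hlim)
  -- compute ∫ F N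
  have hFint : ∀ N : ℕ, (∫ θ in (0:ℝ)..(π/2), F N θ)
      = -(π/4) * ∑ k ∈ Finset.range N, (-1:ℝ)^k/((k:ℝ)+1)^3 := by
    intro N
    have hsplit : (∫ θ in (0:ℝ)..(π/2), F N θ)
        = ∑ k ∈ Finset.range N, (∫ θ in (0:ℝ)..(π/2), θ^2 * Real.cos (2*(k+1)*θ))/(k+1) := by
      rw [hFdef]
      have heq : (fun θ : ℝ => θ^2 * ∑ k ∈ Finset.range N, Real.cos (2*(k+1)*θ)/(k+1))
          = fun θ : ℝ => ∑ k ∈ Finset.range N, (θ^2 * Real.cos (2*(k+1)*θ))/(k+1) := by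
        funext θ
        rw [Finset.mul_sum]
        exact Finset.sum_congr rfl fun k _ => by ring
      rw [heq, intervalIntegral.integral_finset_sum]
      · exact Finset.sum_congr rfl fun k _ => by
          rw [intervalIntegral.integral_div]
      · intro k _
        apply Continuous.intervalIntegrable
        exact ((continuous_pow 2).mul
          (Real.continuous_cos.comp (continuous_const.mul continuous_id))).div_const _
    rw [hsplit]
    rw [Finset.mul_sum]
    refine Finset.sum_congr rfl fun k _ => ?_
    have hval := integral_sq_cos (k+1) (by omega)
    have hcast : (fun x : ℝ => x^2 * Real.cos (2*((k+1:ℕ):ℝ)*x))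
        = fun x : ℝ => x^2 * Real.cos (2*((k:ℝ)+1)*x) := by push_cast; rfl
    rw [hcast] at hval
    rw [hval]
    have hk1 : ((k:ℝ)+1) ≠ 0 := by positivity
    push_cast
    field_simp
    ring
  -- limit of the sums
  have hsums : Tendsto (fun N => -(π/4) * ∑ k ∈ Finset.range N, (-1:ℝ)^k/((k:ℝ)+1)^3)
      atTop (𝓝 (-(π/4) * (3/4 * zeta3))) :=
    (hasSum_alt.tendsto_sum_nat).const_mul _
  have hflim : Tendsto (fun N => ∫ θ in (0:ℝ)..(π/2), F N θ)
      atTop (𝓝 (-(π/4) * (3/4 * zeta3))) := by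
    rw [show (fun N => ∫ θ in (0:ℝ)..(π/2), F N θ)
      = fun N => -(π/4) * ∑ k ∈ Finset.range N, (-1:ℝ)^k/((k:ℝ)+1)^3 from funext hFint]
    exact hsums
  have huniq := tendsto_nhds_unique hdct hflim
  have : (∫ θ in (0:ℝ)..(π/2), f θ) = -∫ θ in (0:ℝ)..(π/2), θ^2 * Real.log (2*Real.sin θ) := by
    rw [hfdef, intervalIntegral.integral_neg]
  rw [this] at huniq
  linarith


lemma integral_sq_log_sin :
    ∫ θ in (0:ℝ)..(π/2), θ^2 * Real.log (Real.sin θ) = 3*π/16 * zeta3 - Real.log 2 * π^3/24 := by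
  have hpi := Real.pi_pos
  have hcongr : ∫ θ in (0:ℝ)..(π/2), θ^2 * Real.log (2*Real.sin θ)
      = ∫ θ in (0:ℝ)..(π/2), (θ^2 * Real.log 2 + θ^2 * Real.log (Real.sin θ)) := by
    apply intervalIntegral.integral_congr_ae
    apply MeasureTheory.ae_of_all
    intro θ hmem
    rw [Set.uIoc_of_le (by positivity)] at hmem
    have hs := sin_pos' hmem.1 hmem.2
    rw [Real.log_mul (by norm_num) hs.ne']
    ring
  have hii2 : IntervalIntegrable (fun θ : ℝ => θ^2 * Real.log 2)
      MeasureTheory.volume 0 (π/2) :=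
    Continuous.intervalIntegrable ((continuous_pow 2).mul continuous_const) _ _
  have hpow : ∫ θ in (0:ℝ)..(π/2), θ^2 * Real.log 2
      = Real.log 2 * π^3/24 := by
    rw [intervalIntegral.integral_mul_const, integral_pow]
    ring
  have h2 := integral_sq_log_two_sin
  rw [hcongr, intervalIntegral.integral_add hii2 ii_sq_log_sin, hpow] at h2
  linarith

lemma integral_cube_cot :
    ∫ θ in (0:ℝ)..(π/2), θ^3 * Real.cos θ / Real.sin θ
      = π^3/8 * Real.log 2 - 9/16*π*zeta3 := by
  have hpi := Real.pi_pos
  set H : ℝ → ℝ := fun θ => θ^3 * Real.log (Real.sin θ) with hHdef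
  set f' : ℝ → ℝ := fun θ => 3*(θ^2 * Real.log (Real.sin θ)) + θ^3 * Real.cos θ / Real.sin θ
    with hf'def
  have hii : IntervalIntegrable f' MeasureTheory.volume 0 (π/2) :=
    (ii_sq_log_sin.const_mul 3).add ii_cube_cot
  have hcont : ContinuousOn H (Set.Icc 0 (π/2)) := by
    intro x hx
    rcases eq_or_lt_of_le hx.1 with h0 | h0
    · -- x = 0
      subst h0
      have hH0 : H 0 = 0 := by simp [hHdef]
      rw [ContinuousWithinAt, hH0]
      have hb : ∀ y ∈ Set.Icc (0:ℝ) (π/2), ‖H y‖ ≤ π*y^2/2 := by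
        intro y hy
        rcases eq_or_lt_of_le hy.1 with hy0 | hy0
        · subst hy0; simp [hHdef]
        · have := abs_log_sin_le hy0 hy.2
          rw [hHdef, Real.norm_eq_abs, abs_mul, abs_of_nonneg (by positivity : (0:ℝ) ≤ y^3)]
          calc y^3 * |Real.log (Real.sin y)| ≤ y^3 * (π/(2*y)) :=
                mul_le_mul_of_nonneg_left this (by positivity)
            _ = π*y^2/2 := by field_simp [hy0.ne']
      apply squeeze_zero_norm'
      · exact eventually_nhdsWithin_of_forall hb
      · have hcg : Tendsto (fun y : ℝ => π*y^2/2) (𝓝 0) (𝓝 (π*0^2/2)) :=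
          (((continuous_const.mul (continuous_pow 2)).div_const 2).tendsto 0)
        simpa using hcg.mono_left nhdsWithin_le_nhds
    · -- x > 0
      have hs := sin_pos' h0 hx.2
      apply ContinuousAt.continuousWithinAt
      exact (continuous_pow 3).continuousAt.mul
        ((Real.continuousAt_log hs.ne').comp Real.continuous_sin.continuousAt)
  have hderiv : ∀ x ∈ Set.Ioo (0:ℝ) (π/2), HasDerivAt H (f' x) x := by
    intro x hx
    have hs := sin_pos' hx.1 hx.2.le
    have h1 : HasDerivAt (fun θ : ℝ => Real.log (Real.sin θ))
        (Real.cos x / Real.sin x) x := by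
      have := (Real.hasDerivAt_log hs.ne').comp x (Real.hasDerivAt_sin x)
      simpa [Function.comp_def, div_eq_inv_mul, mul_comm] using this
    have h2 := (hasDerivAt_pow 3 x).mul h1
    have heq : f' x = ↑(3:ℕ) * x^(3-1) * Real.log (Real.sin x) + x^3 * (Real.cos x/Real.sin x) := by
      rw [hf'def]; push_cast; ring
    rw [heq]; exact h2
  have hftc := intervalIntegral.integral_eq_sub_of_hasDerivAt_of_le (by positivity)
    hcont hderiv hii
  have hH0 : H 0 = 0 := by simp [hHdef]
  have hHpi : H (π/2) = 0 := by simp [hHdef, Real.sin_pi_div_two]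
  rw [hH0, hHpi, sub_zero] at hftc
  have hsplit : ∫ θ in (0:ℝ)..(π/2), f' θ
      = 3*(∫ θ in (0:ℝ)..(π/2), θ^2*Real.log (Real.sin θ))
        + ∫ θ in (0:ℝ)..(π/2), θ^3*Real.cos θ/Real.sin θ := by
    rw [hf'def, intervalIntegral.integral_add (ii_sq_log_sin.const_mul 3) ii_cube_cot,
      intervalIntegral.integral_const_mul]
  rw [hsplit, integral_sq_log_sin] at hftc
  linarith

lemma arcsin_le_mul {y : ℝ} (h0 : 0 ≤ y) (h1 : y ≤ 1) : Real.arcsin y ≤ π/2 * y := by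
  have ha0 : 0 ≤ Real.arcsin y := Real.arcsin_nonneg.mpr h0
  have ha1 : Real.arcsin y ≤ π/2 := Real.arcsin_le_pi_div_two y
  have hj : 2/π * Real.arcsin y ≤ Real.sin (Real.arcsin y) := Real.mul_le_sin ha0 ha1
  rw [Real.sin_arcsin (by linarith) h1] at hj
  have hpi := Real.pi_pos
  rw [div_mul_eq_mul_div, div_le_iff₀ hpi] at hj
  linarith

lemma cont_f : ContinuousOn (fun x : ℝ => Real.arcsin x^3 / x) (Set.Icc 0 1) := by
  intro x hx
  rcases eq_or_lt_of_le hx.1 with h0 | h0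
  · subst h0
    have hf0 : Real.arcsin (0:ℝ)^3 / (0:ℝ) = 0 := by simp
    rw [ContinuousWithinAt, hf0]
    have hb : ∀ y ∈ Set.Icc (0:ℝ) 1, ‖Real.arcsin y^3/y‖ ≤ (π/2)^3 * y^2 := by
      intro y hy
      rcases eq_or_lt_of_le hy.1 with hy0 | hy0
      · subst hy0; simp
      · have hle := arcsin_le_mul hy0.le hy.2
        have ha0 : 0 ≤ Real.arcsin y := Real.arcsin_nonneg.mpr hy0.le
        rw [Real.norm_eq_abs, abs_div, abs_of_nonneg (by positivity : (0:ℝ) ≤ Real.arcsin y^3),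
          abs_of_pos hy0]
        rw [div_le_iff₀ hy0]
        calc Real.arcsin y^3 ≤ (π/2*y)^3 := by
              apply pow_le_pow_left₀ ha0 hle
          _ = (π/2)^3 * y^2 * y := by ring
    apply squeeze_zero_norm'
    · exact eventually_nhdsWithin_of_forall hb
    · have hcg : Tendsto (fun y : ℝ => (π/2)^3*y^2) (𝓝 0) (𝓝 ((π/2)^3*0^2)) :=
        ((continuous_const.mul (continuous_pow 2)).tendsto 0)
      simpa using hcg.mono_left nhdsWithin_le_nhds
  · apply ContinuousAt.continuousWithinAt
    exact (Real.continuous_arcsin.continuousAt.pow 3).div continuousAt_id (ne_of_gt h0)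

lemma subst_step :
    (∫ x in (0:ℝ)..1, Real.arcsin x^3 / x)
      = ∫ θ in (0:ℝ)..(π/2), θ^3 * Real.cos θ / Real.sin θ := by
  have hpi := Real.pi_pos
  have hder : ∀ θ ∈ Set.uIcc (0:ℝ) (π/2), HasDerivAt Real.sin (Real.cos θ) θ :=
    fun θ _ => Real.hasDerivAt_sin θ
  have hcos : ContinuousOn Real.cos (Set.uIcc (0:ℝ) (π/2)) := Real.continuous_cos.continuousOn
  have himg : Real.sin '' (Set.uIcc (0:ℝ) (π/2)) ⊆ Set.Icc 0 1 := by
    intro y hy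
    obtain ⟨θ, hθ, rfl⟩ := hy
    rw [Set.uIcc_of_le (by positivity)] at hθ
    constructor
    · exact Real.sin_nonneg_of_nonneg_of_le_pi hθ.1 (by linarith [hθ.2])
    · exact Real.sin_le_one _
  have := intervalIntegral.integral_comp_smul_deriv' hder hcos (cont_f.mono himg)
  rw [Real.sin_zero, Real.sin_pi_div_two] at this
  rw [← this]
  apply intervalIntegral.integral_congr
  intro θ hθ
  rw [Set.uIcc_of_le (by positivity)] at hθ
  have harc : Real.arcsin (Real.sin θ) = θ :=
    Real.arcsin_sin (by linarith [hθ.1, hpi]) (by linarith [hθ.2])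
  simp only [Function.comp_apply, smul_eq_mul, harc]
  ring

lemma real_main : (∫ x in (0:ℝ)..1, Real.arcsin x^3 / x)
    = π^3/8 * Real.log 2 - 9/16*π*zeta3 := by
  rw [subst_step, integral_cube_cot]

open Real in
theorem arcsin_cube_div_x_integral :
    ((∫ x in (0:ℝ)..1, (arcsin x) ^ 3 / x : ℝ) : ℂ) =
      (π ^ 3 / 8) * Real.log 2 - (9 / 16 : ℂ) * π * riemannZeta 3 := by
  have hz : riemannZeta 3 = ((zeta3 : ℝ) : ℂ) := by
    rw [zeta_eq_tsum_one_div_nat_add_one_cpow (by norm_num : 1 < (3:ℂ).re)]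
    rw [zeta3, Complex.ofReal_tsum]
    congr 1
    funext n
    rw [show ((3:ℂ)) = ((3:ℕ):ℂ) by norm_num, Complex.cpow_natCast]
    push_cast
    ring
  rw [real_main, hz]
  push_cast
  ring
end

section
/- For every real y with |y| ≤ 1, (arcsin y)² = (1/2) · ∑_{n=1}^∞ ((2n)!!/(2n−1)!!) · y^{2n}/n², where (2n)!! = 2n·(2n−2)···2 and (2n−1)!! = (2n−1)·(2n−3)···1. -/
open Real Nat

noncomputable def bb (m : ℕ) : ℝ := ((2*m)‼ : ℝ) / ((2*m+1)‼ : ℝ)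

lemma bb_pos (m : ℕ) : 0 < bb m := by
  unfold bb
  positivity

lemma bb_zero : bb 0 = 1 := by simp [bb]

lemma bb_rec (m : ℕ) : bb (m+1) * (2*m+3) = bb m * (2*m+2) := by
  unfold bb
  rw [show 2*(m+1) = 2*m + 2 from by ring, show 2*m+2+1 = 2*m+1+2 from by ring,
    Nat.doubleFactorial_add_two, Nat.doubleFactorial_add_two]
  have hp : ((2*m+1)‼ : ℝ) ≠ 0 := by positivity
  push_cast
  field_simp
  ring

lemma bb_le_one (m : ℕ) : bb m ≤ 1 := by
  induction m with
  | zero => simp [bb_zero]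
  | succ n ih =>
    have h := bb_rec n
    nlinarith [bb_pos n, bb_pos (n+1)]

noncomputable def S (y : ℝ) : ℝ := ∑' m : ℕ, bb m * y^(2*m+1)

lemma summable_deriv {r : ℝ} (hr0 : 0 ≤ r) (hr : r < 1) :
    Summable (fun m : ℕ => (2*(m:ℝ)+1) * r^(2*m)) := by
  have hr2 : ‖r^2‖ < 1 := by
    rw [Real.norm_eq_abs, abs_of_nonneg (by positivity)]
    nlinarith
  have h1 : Summable (fun m : ℕ => (m:ℝ)^1 * (r^2)^m) :=
    summable_pow_mul_geometric_of_norm_lt_one 1 hr2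
  have h2 : Summable (fun m : ℕ => (r^2)^m) := summable_geometric_of_norm_lt_one hr2
  have := (h1.mul_left 2).add h2
  refine this.congr fun m => ?_
  rw [← pow_mul]
  ring

lemma summable_S {y : ℝ} (hy : |y| < 1) : Summable (fun m : ℕ => bb m * y^(2*m+1)) := by
  have hy2 : |y|^2 < 1 := by nlinarith [abs_nonneg y]
  have h : Summable (fun m : ℕ => |y| * (|y|^2)^m) :=
    (summable_geometric_of_lt_one (by positivity) hy2).mul_left _
  refine Summable.of_norm_bounded h fun m => ?_
  rw [Real.norm_eq_abs, abs_mul, abs_pow, ← pow_mul]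
  calc |bb m| * |y|^(2*m+1) ≤ 1 * |y|^(2*m+1) := by
        apply mul_le_mul_of_nonneg_right _ (by positivity)
        rw [abs_of_pos (bb_pos m)]; exact bb_le_one m
    _ = |y| * |y|^(2*m) := by ring

lemma summable_dS {x : ℝ} (hx : |x| < 1) :
    Summable (fun m : ℕ => bb m * (2*(m:ℝ)+1) * x^(2*m)) := by
  refine Summable.of_norm_bounded (summable_deriv (abs_nonneg x) hx) fun m => ?_
  rw [Real.norm_eq_abs, abs_mul, abs_mul, abs_pow, ← abs_pow]
  have h1 : |bb m| ≤ 1 := by rw [abs_of_pos (bb_pos m)]; exact bb_le_one m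
  have h2 : |(2*(m:ℝ)+1)| = 2*(m:ℝ)+1 := abs_of_pos (by positivity)
  rw [h2]
  have : (0:ℝ) ≤ (2*(m:ℝ)+1) * |x^(2*m)| := by positivity
  nlinarith [abs_nonneg (x^(2*m)), abs_nonneg (bb m)]

lemma hasDerivAt_S {x : ℝ} (hx : |x| < 1) :
    HasDerivAt S (∑' m : ℕ, bb m * (2*(m:ℝ)+1) * x^(2*m)) x := by
  set r : ℝ := (1 + |x|)/2 with hr
  have hxr : |x| < r := by rw [hr]; linarith
  have hr0 : 0 ≤ r := by positivity
  have hr1 : r < 1 := by rw [hr]; linarith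
  unfold S
  refine hasDerivAt_tsum_of_isPreconnected (u := fun m : ℕ => (2*(m:ℝ)+1) * r^(2*m))
    (summable_deriv hr0 hr1) isOpen_Ioo (convex_Ioo (-r) r).isPreconnected
    (g' := fun m y => bb m * (2*(m:ℝ)+1) * y^(2*m))
    (fun n y _ => ?_) (fun n y hy => ?_) (y₀ := 0) ?_ ?_ ?_
  · have h := (hasDerivAt_pow (2*n+1) y).const_mul (bb n)
    convert h using 1
    · rfl
    push_cast [Nat.add_sub_cancel]
    ring
  · rw [Real.norm_eq_abs, abs_mul, abs_mul, abs_pow]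
    have h1 : |bb n| ≤ 1 := by rw [abs_of_pos (bb_pos n)]; exact bb_le_one n
    have h2 : |(2*(n:ℝ)+1)| = 2*(n:ℝ)+1 := abs_of_pos (by positivity)
    have h3 : |y| ≤ r := by
      rw [Set.mem_Ioo] at hy
      rw [abs_le]; constructor <;> linarith [hy.1, hy.2]
    have h4 : |y|^(2*n) ≤ r^(2*n) := pow_le_pow_left₀ (abs_nonneg y) h3 _
    rw [h2]
    calc |bb n| * (2*(n:ℝ)+1) * |y|^(2*n) ≤ 1 * (2*(n:ℝ)+1) * r^(2*n) := by
          apply mul_le_mul (mul_le_mul_of_nonneg_right h1 (by positivity)) h4 (by positivity)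
          positivity
      _ = (2*(n:ℝ)+1) * r^(2*n) := by ring
  · rw [Set.mem_Ioo]; constructor <;> [linarith [abs_nonneg x]; linarith [abs_nonneg x]]
  · refine summable_zero.congr fun n => ?_
    simp [zero_pow]
  · rw [Set.mem_Ioo, ← abs_lt]; exact hxr

lemma ode_S {x : ℝ} (hx : |x| < 1) :
    (1 - x^2) * (∑' m : ℕ, bb m * (2*(m:ℝ)+1) * x^(2*m)) - x * S x = 1 := by
  set A : ℕ → ℝ := fun m => bb m * (2*(m:ℝ)+1) * x^(2*m) with hA
  set B : ℕ → ℝ := fun m => bb m * x^(2*m+1) with hB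
  have hAs : Summable A := summable_dS hx
  have hBs : Summable B := summable_S hx
  have key : ∀ m : ℕ, A (m+1) = x^2 * A m + x * B m := by
    intro m
    have hrec := bb_rec m
    simp only [hA, hB]
    push_cast
    have h1 : bb (m+1) * (2*(m:ℝ)+3) = bb m * (2*(m:ℝ)+2) := by
      have := bb_rec m; push_cast at this; linarith
    have hpow : x^(2*(m+1)) = x^2 * x^(2*m) := by ring
    have hpow2 : x * x^(2*m+1) = x^2 * x^(2*m) := by ring
    calc bb (m+1) * (2*((m:ℝ)+1)+1) * x^(2*(m+1))
        = (bb (m+1) * (2*(m:ℝ)+3)) * x^(2*(m+1)) := by ring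
      _ = bb m * (2*(m:ℝ)+2) * (x^2 * x^(2*m)) := by rw [h1, hpow]
      _ = x^2 * (bb m * (2*(m:ℝ)+1) * x^(2*m)) + x * (bb m * x^(2*m+1)) := by
          rw [← hpow2]; ring
  have hshift : ∑' m : ℕ, A (m+1) = (∑' m : ℕ, A m) - A 0 := by
    have := hAs.tsum_eq_zero_add
    linarith [this]
  have hsplit : ∑' m : ℕ, A (m+1) = x^2 * (∑' m, A m) + x * (∑' m, B m) := by
    rw [tsum_congr key, Summable.tsum_add (hAs.mul_left _) (hBs.mul_left _),
      tsum_mul_left, tsum_mul_left]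
  have hA0 : A 0 = 1 := by simp [hA, bb_zero]
  have hSx : S x = ∑' m, B m := rfl
  rw [hSx]
  have := hshift.symm.trans hsplit
  nlinarith [this]

lemma S_zero : S 0 = 0 := by
  unfold S
  have : (fun m : ℕ => bb m * (0:ℝ)^(2*m+1)) = fun _ => 0 := by
    funext m; simp [zero_pow]
  rw [this, tsum_zero]

lemma hasDerivAt_phi {x : ℝ} (hx : x ∈ Set.Ioo (-1:ℝ) 1) :
    HasDerivAt (fun y => Real.sqrt (1 - y^2) * S y - Real.arcsin y) 0 x := by
  rw [Set.mem_Ioo] at hx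
  have hxa : |x| < 1 := abs_lt.2 hx
  have hu : (0:ℝ) < 1 - x^2 := by nlinarith [hx.1, hx.2]
  have hs : (0:ℝ) < Real.sqrt (1 - x^2) := Real.sqrt_pos.2 hu
  have hsq : Real.sqrt (1 - x^2)^2 = 1 - x^2 := Real.sq_sqrt hu.le
  have h1 : HasDerivAt (fun y : ℝ => 1 - y^2) (-(2*x^1)) x :=
    ((hasDerivAt_pow 2 x).const_sub 1).congr_deriv (by push_cast; ring)
  have hsqrt : HasDerivAt (fun y : ℝ => Real.sqrt (1 - y^2))
      (1/(2*Real.sqrt (1-x^2)) * (-(2*x^1))) x :=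
    (Real.hasDerivAt_sqrt hu.ne').comp x h1
  have hS := hasDerivAt_S hxa
  have harc := Real.hasDerivAt_arcsin (by linarith [hx.1] : x ≠ -1) (by linarith [hx.2] : x ≠ 1)
  have hmul := (hsqrt.mul hS).sub harc
  convert hmul using 1
  · rfl
  · rfl
  · rfl
  have hode := ode_S hxa
  set T := ∑' m : ℕ, bb m * (2*(m:ℝ)+1) * x^(2*m)
  field_simp
  linear_combination (-1)*hode - T*hsq

lemma arcsin_eq_sqrt_mul_S {x : ℝ} (hx : |x| < 1) :
    Real.arcsin x = Real.sqrt (1 - x^2) * S x := by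
  set Phi : ℝ → ℝ := fun y => Real.sqrt (1 - y^2) * S y - Real.arcsin y with hPhi
  have hzero : (ContinuousLinearMap.smulRight (1 : ℝ →L[ℝ] ℝ) (0:ℝ)) = 0 := by
    ext
    simp
  have hconst : Phi x = Phi 0 := by
    apply (convex_Ioo (-1:ℝ) 1).is_const_of_fderivWithin_eq_zero (𝕜 := ℝ)
    · intro z hz
      exact ((hasDerivAt_phi hz).differentiableAt).differentiableWithinAt
    · intro z hz
      rw [fderivWithin_of_isOpen isOpen_Ioo hz]
      exact ((hasDerivAt_phi hz).hasFDerivAt.fderiv).trans hzero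
    · rw [Set.mem_Ioo, ← abs_lt]; exact hx
    · rw [Set.mem_Ioo]; constructor <;> norm_num
  have hPhi0 : Phi 0 = 0 := by simp [hPhi, S_zero]
  have := hconst.trans hPhi0
  simp only [hPhi] at this
  linarith

noncomputable def cc (n : ℕ) : ℝ := ((2*(n+1))‼ : ℝ) / ((2*n+1)‼ : ℝ)

lemma cc_eq (n : ℕ) : cc n = (2*(n:ℝ)+2) * bb n := by
  unfold cc bb
  rw [show 2*(n+1) = 2*n + 2 from by ring, Nat.doubleFactorial_add_two]
  push_cast
  ring

lemma cc_pos (n : ℕ) : 0 < cc n := by unfold cc; positivity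

lemma cc_rec (n : ℕ) : cc (n+1) * (2*(n:ℝ)+3) = cc n * (2*(n:ℝ)+4) := by
  unfold cc
  rw [show 2*(n+1+1) = 2*n+2 + 2 from by ring, show 2*(n+1)+1 = 2*n+1+2 from by ring,
    show 2*(n+1) = 2*n+2 from by ring,
    Nat.doubleFactorial_add_two (2*n+2), Nat.doubleFactorial_add_two (2*n+1)]
  have hp : ((2*n+1)‼ : ℝ) ≠ 0 := by positivity
  push_cast
  field_simp
  ring

lemma cc_le (n : ℕ) : cc n ≤ 2 * Real.sqrt ((n:ℝ)+1) := by
  induction n with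
  | zero =>
    have : cc 0 = 2 := by norm_num [cc]
    rw [this, show ((0:ℕ):ℝ) + 1 = 1 by norm_num, Real.sqrt_one]
    norm_num
  | succ n ih =>
    have hrec := cc_rec n
    have key : Real.sqrt ((n:ℝ)+1) * (2*(n:ℝ)+4) ≤ Real.sqrt ((n:ℝ)+2) * (2*(n:ℝ)+3) := by
      have h1 : Real.sqrt ((n:ℝ)+1) * (2*(n:ℝ)+4) = Real.sqrt (((n:ℝ)+1)*(2*(n:ℝ)+4)^2) := by
        rw [Real.sqrt_mul (by positivity), Real.sqrt_sq (by positivity)]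
      have h2 : Real.sqrt ((n:ℝ)+2) * (2*(n:ℝ)+3) = Real.sqrt (((n:ℝ)+2)*(2*(n:ℝ)+3)^2) := by
        rw [Real.sqrt_mul (by positivity), Real.sqrt_sq (by positivity)]
      rw [h1, h2]
      apply Real.sqrt_le_sqrt
      nlinarith [sq_nonneg ((n:ℝ))]
    have h3 : (0:ℝ) < 2*(n:ℝ)+3 := by positivity
    have h4 : cc (n+1) = cc n * (2*(n:ℝ)+4) / (2*(n:ℝ)+3) := by
      field_simp at hrec ⊢
      linarith
    rw [h4]
    rw [div_le_iff₀ h3]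
    push_cast
    calc cc n * (2*(n:ℝ)+4) ≤ 2 * Real.sqrt ((n:ℝ)+1) * (2*(n:ℝ)+4) := by
          apply mul_le_mul_of_nonneg_right ih (by positivity)
      _ ≤ 2 * Real.sqrt ((n:ℝ)+2) * (2*(n:ℝ)+3) := by nlinarith [key]
      _ = 2 * Real.sqrt (((n:ℕ):ℝ)+1+1) * (2*(n:ℝ)+3) := by ring_nf

lemma summable_bound : Summable (fun n : ℕ => 2 * ((n:ℝ)+1)^(-(3/2) : ℝ)) := by
  apply Summable.mul_left
  have h : Summable (fun n : ℕ => ((n:ℝ))^(-(3/2) : ℝ)) :=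
    Real.summable_nat_rpow.2 (by norm_num)
  have := (summable_nat_add_iff 1).2 h
  refine this.congr fun n => ?_
  push_cast
  ring_nf

lemma term_bound {y : ℝ} (hy : |y| ≤ 1) (n : ℕ) :
    ‖cc n * y^(2*(n+1)) / ((n:ℝ)+1)^2‖ ≤ 2 * ((n:ℝ)+1)^(-(3/2) : ℝ) := by
  have h1 : |y^(2*(n+1))| ≤ 1 := by
    rw [abs_pow]; exact pow_le_one₀ (abs_nonneg y) hy
  have h2 : (0:ℝ) < (n:ℝ)+1 := by positivity
  rw [Real.norm_eq_abs, abs_div, abs_mul, abs_of_pos (cc_pos n), abs_of_pos (by positivity : (0:ℝ) < ((n:ℝ)+1)^2)]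
  have h3 : cc n * |y^(2*(n+1))| ≤ 2 * Real.sqrt ((n:ℝ)+1) := by
    calc cc n * |y^(2*(n+1))| ≤ cc n * 1 := by
          exact mul_le_mul_of_nonneg_left h1 (cc_pos n).le
      _ = cc n := by ring
      _ ≤ 2 * Real.sqrt ((n:ℝ)+1) := cc_le n
  have h4 : (2 : ℝ) * Real.sqrt ((n:ℝ)+1) / ((n:ℝ)+1)^2 = 2 * ((n:ℝ)+1)^(-(3/2) : ℝ) := by
    rw [Real.sqrt_eq_rpow, show (((n:ℝ)+1)^2 : ℝ) = ((n:ℝ)+1)^((2:ℕ):ℝ) from (Real.rpow_natCast _ 2).symm]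
    rw [mul_div_assoc, ← Real.rpow_sub h2]
    norm_num
  rw [← h4]
  apply div_le_div_of_nonneg_right h3 (by positivity) |>.trans_eq rfl

noncomputable def G (y : ℝ) : ℝ := ∑' n : ℕ, cc n * y^(2*(n+1)) / ((n:ℝ)+1)^2

lemma summable_G {y : ℝ} (hy : |y| ≤ 1) :
    Summable (fun n : ℕ => cc n * y^(2*(n+1)) / ((n:ℝ)+1)^2) :=
  Summable.of_norm_bounded summable_bound (term_bound hy)

lemma G_zero : G 0 = 0 := by
  unfold G
  have : (fun n : ℕ => cc n * (0:ℝ)^(2*(n+1)) / ((n:ℝ)+1)^2) = fun _ => 0 := by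
    funext n; simp [zero_pow]
  rw [this, tsum_zero]

lemma hasDerivAt_G {x : ℝ} (hx : |x| < 1) : HasDerivAt G (4 * S x) x := by
  have key : HasDerivAt G (∑' n : ℕ, 4 * bb n * x^(2*n+1)) x := by
    set r : ℝ := (1 + |x|)/2 with hr
    have hxr : |x| < r := by rw [hr]; linarith
    have hr0 : 0 ≤ r := by positivity
    have hr1 : r < 1 := by rw [hr]; linarith
    have hu : Summable (fun n : ℕ => 4 * r^(2*n+1)) := by
      have hr2 : r^2 < 1 := by nlinarith
      have : Summable (fun n : ℕ => (4*r) * (r^2)^n) :=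
        (summable_geometric_of_lt_one (by positivity) hr2).mul_left _
      refine this.congr fun n => ?_
      rw [← pow_mul]
      ring
    unfold G
    refine hasDerivAt_tsum_of_isPreconnected hu isOpen_Ioo
      (convex_Ioo (-r) r).isPreconnected
      (g' := fun n z => 4 * bb n * z^(2*n+1))
      (fun n z _ => ?_) (fun n z hz => ?_) (y₀ := 0) ?_ ?_ ?_
    · have h := ((hasDerivAt_pow (2*(n+1)) z).const_mul (cc n)).div_const (((n:ℝ)+1)^2)
      convert h using 1
      · rfl
      rw [cc_eq]
      have h2 : (2*(n+1) - 1) = 2*n+1 := by omega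
      rw [h2]
      push_cast
      have h3 : ((n:ℝ)+1)^2 ≠ 0 := by positivity
      field_simp
      ring
    · rw [Real.norm_eq_abs, abs_mul, abs_mul, abs_pow]
      have h1 : |bb n| ≤ 1 := by rw [abs_of_pos (bb_pos n)]; exact bb_le_one n
      have h3 : |z| ≤ r := by
        rw [Set.mem_Ioo] at hz
        rw [abs_le]; constructor <;> linarith [hz.1, hz.2]
      have h4 : |z|^(2*n+1) ≤ r^(2*n+1) := pow_le_pow_left₀ (abs_nonneg z) h3 _
      have h5 : |(4:ℝ)| = 4 := by norm_num
      rw [h5]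
      nlinarith [pow_nonneg (abs_nonneg z) (2*n+1), abs_nonneg (bb n)]
    · rw [Set.mem_Ioo]; constructor <;> linarith [abs_nonneg x]
    · refine summable_zero.congr fun n => ?_
      simp [zero_pow]
    · rw [Set.mem_Ioo, ← abs_lt]; exact hxr
  have : ∑' n : ℕ, 4 * bb n * x^(2*n+1) = 4 * S x := by
    unfold S
    rw [← tsum_mul_left]
    exact tsum_congr fun n => by ring
  rwa [this] at key

lemma hasDerivAt_psi {x : ℝ} (hx : x ∈ Set.Ioo (-1:ℝ) 1) :
    HasDerivAt (fun y => (1/2) * G y - Real.arcsin y ^ 2) 0 x := by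
  rw [Set.mem_Ioo] at hx
  have hxa : |x| < 1 := abs_lt.2 hx
  have hu : (0:ℝ) < 1 - x^2 := by nlinarith [hx.1, hx.2]
  have hs : (0:ℝ) < Real.sqrt (1 - x^2) := Real.sqrt_pos.2 hu
  have hG := (hasDerivAt_G hxa).const_mul (1/2 : ℝ)
  have harc := Real.hasDerivAt_arcsin (by linarith [hx.1] : x ≠ -1) (by linarith [hx.2] : x ≠ 1)
  have hpow := harc.pow 2
  have hD := hG.sub hpow
  convert hD using 1
  · rfl
  · rfl
  · rfl
  rw [arcsin_eq_sqrt_mul_S hxa]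
  field_simp
  ring

lemma main_open {x : ℝ} (hx : |x| < 1) : Real.arcsin x ^ 2 = (1/2) * G x := by
  set Psi : ℝ → ℝ := fun y => (1/2) * G y - Real.arcsin y ^ 2 with hPsi
  have hzero : (ContinuousLinearMap.smulRight (1 : ℝ →L[ℝ] ℝ) (0:ℝ)) = 0 := by
    ext
    simp
  have hconst : Psi x = Psi 0 := by
    apply (convex_Ioo (-1:ℝ) 1).is_const_of_fderivWithin_eq_zero (𝕜 := ℝ)
    · intro z hz
      exact ((hasDerivAt_psi hz).differentiableAt).differentiableWithinAt
    · intro z hz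
      rw [fderivWithin_of_isOpen isOpen_Ioo hz]
      exact ((hasDerivAt_psi hz).hasFDerivAt.fderiv).trans hzero
    · rw [Set.mem_Ioo, ← abs_lt]; exact hx
    · rw [Set.mem_Ioo]; constructor <;> norm_num
  have hPsi0 : Psi 0 = 0 := by simp [hPsi, G_zero]
  have := hconst.trans hPsi0
  simp only [hPsi] at this
  linarith

lemma main_key {y : ℝ} (hy : |y| ≤ 1) : Real.arcsin y ^ 2 = (1/2) * G y := by
  rcases lt_or_eq_of_le hy with h | h
  · exact main_open h
  · -- |y| = 1
    set yk : ℕ → ℝ := fun k => (1 - 1/((k:ℝ)+1)) * y with hyk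
    have hfrac : ∀ k : ℕ, 0 < 1/((k:ℝ)+1) ∧ 1/((k:ℝ)+1) ≤ 1 := by
      intro k
      constructor
      · positivity
      · rw [div_le_one (by positivity)]; linarith [Nat.cast_nonneg (α := ℝ) k]
    have habs : ∀ k, |yk k| < 1 := by
      intro k
      have h1 : |1 - 1/((k:ℝ)+1)| = 1 - 1/((k:ℝ)+1) := by
        rw [abs_of_nonneg]; linarith [(hfrac k).2]
      calc |yk k| = |1 - 1/((k:ℝ)+1)| * |y| := abs_mul _ _
        _ = (1 - 1/((k:ℝ)+1)) * 1 := by rw [h1, ← h]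
        _ < 1 := by linarith [(hfrac k).1]
    have habs' : ∀ k, |yk k| ≤ 1 := fun k => (habs k).le
    have htend : Filter.Tendsto yk Filter.atTop (nhds y) := by
      have h1 : Filter.Tendsto (fun k : ℕ => 1 - 1/((k:ℝ)+1)) Filter.atTop (nhds 1) := by
        have := tendsto_one_div_add_atTop_nhds_zero_nat (𝕜 := ℝ)
        have h2 := Filter.Tendsto.const_sub (1:ℝ) this
        simpa using h2
      have h3 := h1.mul_const y
      rw [one_mul] at h3
      exact h3
    have hL : Filter.Tendsto (fun k => Real.arcsin (yk k) ^ 2) Filter.atTop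
        (nhds (Real.arcsin y ^ 2)) :=
      ((Real.continuous_arcsin.pow 2).continuousAt.tendsto).comp htend
    have hR : Filter.Tendsto (fun k => G (yk k)) Filter.atTop (nhds (G y)) := by
      unfold G
      apply tendsto_tsum_of_dominated_convergence summable_bound
      · intro n
        exact ((htend.pow (2*(n+1))).const_mul (cc n)).div_const _
      · filter_upwards with k n
        exact term_bound (habs' k) n
    have hR2 : Filter.Tendsto (fun k => Real.arcsin (yk k) ^ 2) Filter.atTop
        (nhds ((1/2) * G y)) := by
      have heq : (fun k => Real.arcsin (yk k) ^ 2) = fun k => (1/2) * G (yk k) := by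
        funext k; exact main_open (habs k)
      rw [heq]
      exact hR.const_mul _
    exact tendsto_nhds_unique hL hR2

open Real Nat in
theorem arcsin_sq_series (y : ℝ) (hy : |y| ≤ 1) :
    (arcsin y) ^ 2 =
      (1 / 2) * ∑' n : ℕ,
        ((2 * (n + 1))‼ : ℝ) / ((2 * (n + 1) - 1)‼ : ℝ) *
          y ^ (2 * (n + 1)) / (n + 1 : ℝ) ^ 2 := by
  have hG_eq : (∑' n : ℕ, ((2 * (n + 1))‼ : ℝ) / ((2 * (n + 1) - 1)‼ : ℝ) *
      y ^ (2 * (n + 1)) / (n + 1 : ℝ) ^ 2) = G y := by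
    unfold G
    apply tsum_congr
    intro n
    rw [show 2*(n+1)-1 = 2*n+1 from by omega]
    unfold cc
    norm_num
  rw [hG_eq]
  exact main_key hy
end
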